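/- Let (R, m) be a local ring of positive depth and I a nonzero ideal of R. Then the ideal J = mI is a Burch ideal, i.e., mJ ≠ m(J : m). -/

import Mathlib

open IsLocalRing

/-- Example 2.3(2)(3): if `(R, m)` is a Noetherian local ring of positive depth and `I` is a
nonzero ideal, then `J = mI` is a Burch ideal, i.e. `mJ ≠ m(J : m)`. -/
theorem mI_is_burch {R : Type*} [CommRing R] [IsNoetherianRing R] [IsLocalRing R]
    (hdepth : ∃ x ∈ maximalIdeal R, x ∈ nonZeroDivisors R)
    (I : Ideal R) (hI : I ≠ ⊥) :
    maximalIdeal R * (maximalIdeal R * I) ≠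
      maximalIdeal R * Submodule.colon (maximalIdeal R * I) (maximalIdeal R) := by
  set m := maximalIdeal R
  set J := m * I with hJ
  -- J ≠ ⊥
  have hJne : J ≠ ⊥ := by
    obtain ⟨x, hxm, hxnzd⟩ := hdepth
    obtain ⟨i, hiI, hine⟩ := Submodule.exists_mem_ne_zero_of_ne_bot hI
    intro hbot
    have : x * i ∈ J := Ideal.mul_mem_mul hxm hiI
    rw [hbot, Ideal.mem_bot] at this
    rw [mul_comm] at this
    exact hine (hxnzd.2 i this)
  intro h
  -- I ≤ (J : m)
  have hIcolon : I ≤ Submodule.colon J m := by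
    intro i hiI
    rw [Submodule.mem_colon]
    intro r hrm
    rw [smul_eq_mul, mul_comm]
    exact Ideal.mul_mem_mul hrm hiI
  have hJle : J ≤ m * J := by
    calc J = m * I := hJ
    _ ≤ m * Submodule.colon J m := Ideal.mul_mono_right hIcolon
    _ = m * J := h.symm
  have : J = ⊥ := by
    apply Submodule.eq_bot_of_le_smul_of_le_jacobson_bot m J
      (IsNoetherian.noetherian J)
    · rwa [Ideal.smul_eq_mul]
    · exact maximalIdeal_le_jacobson ⊥
  exact hJne this
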